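/- Let p be an odd prime, n ≥ 2, and F_q a field with gcd(q, p) = 1. Consider the group G = ⟨a, b | a^{p^n} = 1, b^p = 1, b^{-1}ab = a^{p^{n-1}+1}⟩ of order p^{n+1}. Then the pair (⟨a⟩, ⟨1⟩) is a strong Shoda pair of G: ⟨a⟩ is a normal subgroup of G, ⟨a⟩ is cyclic, and ⟨a⟩/⟨1⟩ is a maximal abelian subgroup of N_G(⟨1⟩)/⟨1⟩ = G. -/

import Mathlib

/-- Let p be an odd prime, n ≥ 2, and let G be the metacyclic
group of order p^{n+1} with presentation
⟨a, b ∣ a^{p^n} = 1, b^p = 1, b⁻¹ab = a^{p^{n-1}+1}⟩.  Then (⟨a⟩, ⟨1⟩) is a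
strong Shoda pair of G: ⟨a⟩ is a normal cyclic subgroup of G which is a
maximal abelian subgroup of G (its centralizer is itself). -/
theorem strong_shoda_pair_maximal_cyclic
    (p n q : ℕ) (hp : p.Prime) (hpodd : Odd p) (hn : 2 ≤ n)
    (hq : Nat.Coprime q p)
    (G : Type*) [Group G] [Finite G] (a b : G)
    (hcard : Nat.card G = p ^ (n + 1))
    (hgen : Subgroup.closure {a, b} = ⊤)
    (ha : orderOf a = p ^ n)
    (hb : b ^ p = 1)
    (hrel : b⁻¹ * a * b = a ^ (p ^ (n - 1) + 1)) :
    (Subgroup.zpowers a).Normal ∧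
    IsCyclic (Subgroup.zpowers a) ∧
    Subgroup.centralizer {a} = Subgroup.zpowers a := by
  set c : ℕ := p ^ (n - 1) + 1 with hc
  have key : ∀ k : ℤ, b⁻¹ * a ^ k * b = a ^ ((c : ℤ) * k) := by
    intro k
    have h1 : b⁻¹ * a ^ k * (b⁻¹)⁻¹ = (b⁻¹ * a * (b⁻¹)⁻¹) ^ k := (conj_zpow).symm
    rw [inv_inv] at h1
    rw [h1, hrel, ← zpow_natCast a c, ← zpow_mul]
  have hbinv : b⁻¹ ∈ Subgroup.normalizer (Subgroup.zpowers a : Set G) := by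
    apply Subgroup.mem_normalizer_fintype
    rintro x ⟨k, rfl⟩
    refine ⟨(c : ℤ) * k, ?_⟩
    simpa using (key k).symm
  have hnormal : (Subgroup.zpowers a).Normal := by
    rw [← Subgroup.normalizer_eq_top_iff, ← top_le_iff, ← hgen, Subgroup.closure_le]
    rintro x (rfl | rfl)
    · exact Subgroup.le_normalizer (Subgroup.mem_zpowers x)
    · simpa using inv_mem hbinv
  haveI := hnormal
  have hcyc : IsCyclic (Subgroup.zpowers a) := by
    refine ⟨⟨⟨a, Subgroup.mem_zpowers a⟩, ?_⟩⟩
    rintro ⟨x, k, rfl⟩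
    exact ⟨k, Subtype.ext (by simp)⟩
  have keyN : ∀ m : ℕ, (b ^ m)⁻¹ * a * b ^ m = a ^ (c ^ m) := by
    intro m
    induction m with
    | zero => simp
    | succ m ih =>
      have h2 : (b ^ (m+1))⁻¹ * a * b ^ (m+1) = b⁻¹ * ((b ^ m)⁻¹ * a * b ^ m) * b := by
        rw [pow_succ]; group
      have h3 := key (c ^ m : ℕ)
      rw [zpow_natCast] at h3
      rw [h2, ih, h3, ← zpow_natCast a (c ^ (m+1))]
      push_cast
      ring_nf
  have hd : p ^ n ∣ p ^ (n - 1) * p ^ (n - 1) := by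
    rw [← pow_add]; exact pow_dvd_pow p (by omega)
  have hmod : ∀ m : ℕ, c ^ m ≡ m * p ^ (n - 1) + 1 [MOD p ^ n] := by
    intro m
    induction m with
    | zero => simpa using Nat.ModEq.refl (n := p ^ n) 1
    | succ m ih =>
      calc c ^ (m + 1) = c ^ m * c := pow_succ c m
        _ ≡ (m * p ^ (n - 1) + 1) * c [MOD p ^ n] := ih.mul_right c
        _ = ((m + 1) * p ^ (n - 1) + 1) + m * (p ^ (n - 1) * p ^ (n - 1)) := by
            rw [hc]; ring
        _ ≡ ((m + 1) * p ^ (n - 1) + 1) + 0 [MOD p ^ n] :=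
            (Nat.ModEq.refl _).add ((Nat.modEq_zero_iff_dvd).mpr (hd.mul_left m))
        _ = (m + 1) * p ^ (n - 1) + 1 := by ring
  refine ⟨hnormal, hcyc, ?_⟩
  ext g
  constructor
  · intro hg
    rw [Subgroup.mem_centralizer_iff] at hg
    have hcomm : a * g = g * a := hg a rfl
    have hQ : ∀ x : G, ∃ j i : ℤ, x = b ^ j * a ^ i := by
      intro x
      have h1 : Subgroup.map (QuotientGroup.mk' (Subgroup.zpowers a))
          (Subgroup.closure {a, b}) = ⊤ := by
        rw [hgen]
        exact Subgroup.map_top_of_surjective _ (QuotientGroup.mk'_surjective _)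
      rw [MonoidHom.map_closure] at h1
      have h2 : (QuotientGroup.mk' (Subgroup.zpowers a)) '' {a, b} =
          {1, QuotientGroup.mk b} := by
        rw [Set.image_insert_eq, Set.image_singleton]
        congr 1
        exact (QuotientGroup.eq_one_iff a).mpr (Subgroup.mem_zpowers a)
      rw [h2] at h1
      have htop : (⊤ : Subgroup (G ⧸ Subgroup.zpowers a)) ≤
          Subgroup.zpowers (QuotientGroup.mk b) := by
        rw [← h1, Subgroup.closure_le]
        rintro y (rfl | rfl)
        · exact one_mem _
        · exact Subgroup.mem_zpowers _
      obtain ⟨j, hj⟩ := htop (Subgroup.mem_top (QuotientGroup.mk x))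
      have hj' : (QuotientGroup.mk (b ^ j) : G ⧸ Subgroup.zpowers a) = QuotientGroup.mk x := by
        simpa using hj
      rw [QuotientGroup.eq] at hj'
      obtain ⟨i, hi⟩ := hj'
      have hi' : a ^ i = (b ^ j)⁻¹ * x := hi
      refine ⟨j, i, ?_⟩
      rw [hi']
      group
    obtain ⟨j, i, rfl⟩ := hQ g
    have hbj : a * b ^ j = b ^ j * a := by
      have h3 : (a * b ^ j) * a ^ i = (b ^ j * a) * a ^ i := by
        calc (a * b ^ j) * a ^ i = a * (b ^ j * a ^ i) := by group
          _ = (b ^ j * a ^ i) * a := hcomm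
          _ = b ^ j * (a ^ i * a) := by group
          _ = b ^ j * (a * a ^ i) := by rw [← zpow_one_add, ← zpow_add_one]; ring_nf
          _ = (b ^ j * a) * a ^ i := by group
      exact mul_right_cancel h3
    set m : ℕ := (j % p).toNat with hm
    have hp' : (0:ℤ) < (p:ℤ) := by exact_mod_cast hp.pos
    have h5 : (0:ℤ) ≤ j % p := Int.emod_nonneg j hp'.ne'
    have h6 : j % (p:ℤ) < p := Int.emod_lt_of_pos j hp'
    have hmp : m < p := by omega
    have hbjm : b ^ j = b ^ m := by
      have h4 : j = p * (j / p) + j % p := (Int.mul_ediv_add_emod j p).symm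
      calc b ^ j = b ^ ((p : ℤ) * (j / p) + j % p) := by rw [← h4]
        _ = (b ^ (p:ℤ)) ^ (j / p) * b ^ (j % p) := by rw [zpow_add, zpow_mul]
        _ = b ^ (j % p) := by rw [zpow_natCast, hb]; simp
        _ = b ^ m := by rw [hm, ← zpow_natCast b ((j % p).toNat), Int.toNat_of_nonneg h5]
    have hconj : a ^ (c ^ m) = a := by
      rw [← keyN m, ← hbjm, mul_assoc, hbj]
      group
    have hmodm : c ^ m ≡ 1 [MOD p ^ n] := by
      have := (pow_eq_pow_iff_modEq (x := a) (n := c ^ m) (m := 1)).mp (by simpa using hconj)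
      rwa [ha] at this
    have hdvd : p ^ n ∣ m * p ^ (n - 1) := by
      have h7 : m * p ^ (n - 1) + 1 ≡ 0 + 1 [MOD p ^ n] := by
        simpa using (hmod m).symm.trans hmodm
      exact (Nat.modEq_zero_iff_dvd).mp (Nat.ModEq.add_right_cancel' 1 h7)
    have hpm : p ∣ m := by
      have h8 : p ^ (n-1) * p ∣ p ^ (n-1) * m := by
        have h9 : p ^ (n-1) * p = p ^ n := by rw [← pow_succ]; congr 1; omega
        rw [h9, mul_comm]
        exact hdvd
      exact (mul_dvd_mul_iff_left (pow_ne_zero (n-1) hp.pos.ne')).mp h8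
    have hm0 : m = 0 := Nat.eq_zero_of_dvd_of_lt hpm hmp
    rw [hbjm, hm0]
    simp
  · rintro ⟨k, rfl⟩
    rw [Subgroup.mem_centralizer_iff]
    rintro h rfl
    show h * h ^ k = h ^ k * h
    exact (Commute.refl h).zpow_right k
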